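/- Duality for the linear marginal penalty: for any bounded measurable A₁ : X → ℝ, probability measure ν, and α > 0, sup over finite nonnegative measures P ≪ ν of [∫ A₁ dP − α ∫ Ψ(dP/dν) dν] = α ∫ Ψ*(A₁/α) dν, where Ψ is convex lower semi-continuous and superlinear, and Ψ* its convex conjugate. -/

import Mathlib

open MeasureTheory
open scoped ENNReal

set_option maxHeartbeats 2000000 in
/-- Duality for the linear marginal penalty: for bounded measurable
`A₁ : X → ℝ`, a probability measure `ν`, `α > 0`, and a convex, lower
semi-continuous, superlinear entropy function `Ψ : [0,∞) → [0,∞]` with convex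
conjugate `Ψ*` (real-valued, by superlinearity), the supremum over nonnegative
measures `P ≪ ν` (identified with their densities `p = dP/dν ≥ 0`) of
`∫ A₁ p dν − α ∫ Ψ(p) dν` equals `α ∫ Ψ*(A₁/α) dν`. -/
theorem duality_linear_marginal_penalty
    {X : Type*} [MeasurableSpace X]
    (ν : Measure X) [IsProbabilityMeasure ν]
    (A : X → ℝ) (hA : Measurable A) (hAb : ∃ C : ℝ, ∀ x, |A x| ≤ C)
    (α : ℝ) (hα : 0 < α)
    (Ψ : ℝ → ℝ≥0∞)
    (hΨ1 : Ψ 1 = 0)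
    (hconv : ∀ x ∈ Set.Ici (0 : ℝ), ∀ y ∈ Set.Ici (0 : ℝ), ∀ a b : ℝ,
      0 ≤ a → 0 ≤ b → a + b = 1 →
      Ψ (a * x + b * y) ≤ ENNReal.ofReal a * Ψ x + ENNReal.ofReal b * Ψ y)
    (hlsc : LowerSemicontinuousOn Ψ (Set.Ici (0 : ℝ)))
    (hsuper : Filter.Tendsto (fun x : ℝ => Ψ x / ENNReal.ofReal x)
      Filter.atTop (nhds ⊤))
    (Ψstar : ℝ → ℝ)
    (hconj : ∀ y : ℝ, IsLUB {z : EReal | ∃ s : ℝ, 0 ≤ s ∧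
      z = ((s * y : ℝ) : EReal) - (Ψ s : EReal)} ((Ψstar y : ℝ) : EReal)) :
    IsLUB {r : ℝ | ∃ p : X → ℝ, Measurable p ∧ (∀ x, 0 ≤ p x)
        ∧ (∀ x, Ψ (p x) ≠ ⊤)
        ∧ Integrable (fun x => A x * p x - α * (Ψ (p x)).toReal) ν
        ∧ r = ∫ x, (A x * p x - α * (Ψ (p x)).toReal) ∂ν}
      (α * ∫ x, Ψstar (A x / α) ∂ν) := by
  classical
  have hαne : α ≠ 0 := ne_of_gt hα
  obtain ⟨C₀, hC₀⟩ := hAb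
  set Cb : ℝ := max C₀ 0 with hCb
  have hCb0 : 0 ≤ Cb := le_max_right _ _
  have hCbx : ∀ x, |A x| ≤ Cb := fun x => (hC₀ x).trans (le_max_left _ _)
  set M : ℝ := Cb / α + 1 with hMdef
  have hM0 : 0 < M := by positivity
  have hAM : ∀ x, -M ≤ A x / α ∧ A x / α ≤ M := by
    intro x
    have h1 : |A x / α| = |A x| / α := by rw [abs_div, abs_of_pos hα]
    have h2 : |A x| / α ≤ Cb / α := by gcongr; exact hCbx x
    have h3 : |A x / α| ≤ M := by rw [h1]; linarith
    exact abs_le.mp (h3)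
  clear_value Cb M
  -- finite-value coercion lemma
  have hcoe : ∀ s : ℝ, Ψ s ≠ ⊤ → (((Ψ s).toReal : ℝ) : EReal) = ((Ψ s : ℝ≥0∞) : EReal) := by
    intro s hfin
    rw [← EReal.toReal_coe_ennreal (x := Ψ s)]
    exact EReal.coe_toReal (by simpa [EReal.coe_ennreal_eq_top_iff] using hfin)
      (EReal.coe_ennreal_ne_bot _)
  -- (L1) Fenchel upper bound, real version
  have hub : ∀ y s : ℝ, 0 ≤ s → Ψ s ≠ ⊤ → s * y - (Ψ s).toReal ≤ Ψstar y := by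
    intro y s hs hfin
    have h1 : ((s * y : ℝ) : EReal) - ((Ψ s : ℝ≥0∞) : EReal) ≤ ((Ψstar y : ℝ) : EReal) :=
      (hconj y).1 ⟨s, hs, rfl⟩
    rw [← hcoe s hfin, ← EReal.coe_sub] at h1
    exact_mod_cast h1
  -- (L3) ε-approximate attainment
  have hlb3 : ∀ y ε : ℝ, 0 < ε → ∃ s : ℝ, 0 ≤ s ∧ Ψ s ≠ ⊤ ∧
      Ψstar y - ε < s * y - (Ψ s).toReal := by
    intro y ε hε
    have hlt : ((Ψstar y - ε : ℝ) : EReal) < ((Ψstar y : ℝ) : EReal) := by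
      exact_mod_cast sub_lt_self _ hε
    obtain ⟨z, ⟨s, hs, rfl⟩, hz1, _⟩ := (hconj y).exists_between hlt
    rcases eq_or_ne (Ψ s) ⊤ with ht | ht
    · rw [ht] at hz1
      simp only [EReal.coe_ennreal_top, EReal.sub_top] at hz1
      exact absurd hz1 (not_lt_bot)
    · refine ⟨s, hs, ht, ?_⟩
      rw [← hcoe s ht, ← EReal.coe_sub] at hz1
      exact_mod_cast hz1
  -- (L4) monotone
  have hmono : Monotone Ψstar := by
    intro y y' hyy'
    refine le_of_forall_sub_le ?_
    intro ε hε
    obtain ⟨s, hs, hfin, hlt⟩ := hlb3 y ε hε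
    have h1 := hub y' s hs hfin
    nlinarith [mul_le_mul_of_nonneg_left hyy' hs]
  -- (L5) convexity
  have hconvstar : ∀ y y' a b : ℝ, 0 ≤ a → 0 ≤ b → a + b = 1 →
      Ψstar (a * y + b * y') ≤ a * Ψstar y + b * Ψstar y' := by
    intro y y' a b ha hb hab
    refine le_of_forall_sub_le ?_
    intro ε hε
    obtain ⟨s, hs, hfin, hlt⟩ := hlb3 (a * y + b * y') ε hε
    have h1 := hub y s hs hfin
    have h2 := hub y' s hs hfin
    have key : a * (s * y - (Ψ s).toReal) + b * (s * y' - (Ψ s).toReal)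
        = s * (a * y + b * y') - (Ψ s).toReal := by
      linear_combination (-(Ψ s).toReal) * hab
    nlinarith [mul_le_mul_of_nonneg_left h1 ha, mul_le_mul_of_nonneg_left h2 hb]
  -- Lipschitz constant on [-M, M+1]
  set L : ℝ := Ψstar (M + 2) - Ψstar (-M) with hLdef
  have hL0 : 0 ≤ L := sub_nonneg.mpr (hmono (by linarith))
  clear_value L
  have hlip : ∀ y y' : ℝ, -M ≤ y → y ≤ y' → y' ≤ M + 1 →
      Ψstar y' - Ψstar y ≤ L * (y' - y) := by
    intro y y' h1 h2 h3
    have hd : (0 : ℝ) < M + 2 - y := by linarith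
    set t : ℝ := (M + 2 - y') / (M + 2 - y) with htdef
    have ht0 : 0 ≤ t := div_nonneg (by linarith) hd.le
    have ht1 : t ≤ 1 := by rw [htdef, div_le_one hd]; linarith
    have hyy : t * y + (1 - t) * (M + 2) = y' := by
      rw [htdef]; field_simp; ring
    have hc := hconvstar y (M + 2) t (1 - t) ht0 (by linarith) (by ring)
    rw [hyy] at hc
    have h1t : 1 - t = (y' - y) / (M + 2 - y) := by rw [htdef]; field_simp; ring
    have h1t' : 1 - t ≤ y' - y := by
      rw [h1t, div_le_iff₀ hd]
      nlinarith
    have hmy : Ψstar (-M) ≤ Ψstar y := hmono h1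
    have hyM : Ψstar (M + 2) - Ψstar y ≤ L := by rw [hLdef]; linarith
    have e1 : (1 - t) * (Ψstar (M + 2) - Ψstar y) ≤ (1 - t) * L :=
      mul_le_mul_of_nonneg_left hyM (by linarith)
    have e2 : (1 - t) * L ≤ (y' - y) * L := mul_le_mul_of_nonneg_right h1t' hL0
    nlinarith [hc, e1, e2]
  -- measurability and integrability of Ψstar ∘ (A/α)
  have hmeasstar : Measurable Ψstar := hmono.measurable
  have hint_star : Integrable (fun x => Ψstar (A x / α)) ν := by
    refine ⟨(hmeasstar.comp (hA.div_const α)).aestronglyMeasurable, ?_⟩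
    refine HasFiniteIntegral.of_bounded (C := max |Ψstar M| |Ψstar (-M)|) (ae_of_all _ fun x => ?_)
    have h1 : Ψstar (A x / α) ≤ Ψstar M := hmono (hAM x).2
    have h2 : Ψstar (-M) ≤ Ψstar (A x / α) := hmono (hAM x).1
    rw [Real.norm_eq_abs, abs_le]
    constructor
    · calc -(max |Ψstar M| |Ψstar (-M)|) ≤ -|Ψstar (-M)| := by
            simp only [neg_le_neg_iff]; exact le_max_right _ _
        _ ≤ Ψstar (-M) := neg_abs_le _
        _ ≤ _ := h2
    · exact h1.trans ((le_abs_self _).trans (le_max_left _ _))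
  constructor
  · -- upper bound
    rintro r ⟨p, hpm, hp0, hpfin, hpint, rfl⟩
    have hpt : ∀ x, A x * p x - α * (Ψ (p x)).toReal ≤ α * Ψstar (A x / α) := by
      intro x
      have h := hub (A x / α) (p x) (hp0 x) (hpfin x)
      have hid : α * (p x * (A x / α)) = A x * p x := by field_simp
      nlinarith [mul_le_mul_of_nonneg_left h hα.le]
    calc ∫ x, (A x * p x - α * (Ψ (p x)).toReal) ∂ν
        ≤ ∫ x, α * Ψstar (A x / α) ∂ν :=
          integral_mono hpint (hint_star.const_mul α) hpt
      _ = α * ∫ x, Ψstar (A x / α) ∂ν := integral_const_mul α _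
  · -- least upper bound
    rintro b hb
    refine le_of_forall_sub_le ?_
    intro ε hε
    set ε₁ : ℝ := ε / (2 * α) with hε₁def
    have hε₁ : 0 < ε₁ := by positivity
    set δ : ℝ := ε / (2 * α * (L + 1)) with hδdef
    have hδ : 0 < δ := by positivity
    clear_value δ
    clear_value ε₁
    -- choose near-optimal slopes on the grid
    have hchoice : ∀ j : ℕ, ∃ s : ℝ, 0 ≤ s ∧ Ψ s ≠ ⊤ ∧
        Ψstar (-M + δ * j) - ε₁ < s * (-M + δ * j) - (Ψ s).toReal :=
      fun j => hlb3 _ _ hε₁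
    choose s hs0 hsfin hsgood using hchoice
    set J : X → ℕ := fun x => ⌊(A x / α + M) / δ⌋₊ with hJdef
    set p : X → ℝ := fun x => s (J x) with hpdef
    have hJm : Measurable J := by
      exact Nat.measurable_floor.comp (((hA.div_const α).add_const M).div_const δ)
    have hpm' : Measurable fun x => s (J x) := (measurable_from_nat (f := s)).comp hJm
    have hpm : Measurable p := hpdef ▸ hpm'
    have hxge : ∀ x, 0 ≤ A x / α + M := fun x => by linarith [(hAM x).1]
    have hfl1 : ∀ x, -M + δ * J x ≤ A x / α := by
      intro x
      have h1 : ((J x : ℝ)) ≤ (A x / α + M) / δ := Nat.floor_le (div_nonneg (hxge x) hδ.le)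
      have h2 : δ * (J x : ℝ) ≤ δ * ((A x / α + M) / δ) := mul_le_mul_of_nonneg_left h1 hδ.le
      rw [mul_div_cancel₀ _ (ne_of_gt hδ)] at h2
      linarith
    have hfl2 : ∀ x, A x / α < -M + δ * J x + δ := by
      intro x
      have h1 : (A x / α + M) / δ < (J x : ℝ) + 1 := Nat.lt_floor_add_one _
      have h2 : δ * ((A x / α + M) / δ) < δ * ((J x : ℝ) + 1) := by
        exact mul_lt_mul_of_pos_left h1 hδ
      rw [mul_div_cancel₀ _ (ne_of_gt hδ)] at h2
      nlinarith
    set N : ℕ := ⌊2 * M / δ⌋₊ with hNdef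
    have hJb : ∀ x, J x ≤ N := by
      intro x
      refine Nat.floor_le_floor ?_
      gcongr
      linarith [(hAM x).2]
    have hne : (Finset.range (N + 1)).Nonempty := ⟨0, by simp⟩
    set K₁ : ℝ := (Finset.range (N + 1)).sup' hne (fun j => |s j|) with hK₁def
    set K₂ : ℝ := (Finset.range (N + 1)).sup' hne (fun j => (Ψ (s j)).toReal) with hK₂def
    have hmemJ : ∀ x, J x ∈ Finset.range (N + 1) :=
      fun x => Finset.mem_range.mpr (Nat.lt_succ_of_le (hJb x))
    have hpK : ∀ x, |p x| ≤ K₁ := fun x => Finset.le_sup' (fun j => |s j|) (hmemJ x)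
    have htK : ∀ x, (Ψ (p x)).toReal ≤ K₂ :=
      fun x => Finset.le_sup' (fun j => (Ψ (s j)).toReal) (hmemJ x)
    clear_value p J N K₁ K₂
    have hint_p : Integrable (fun x => A x * p x - α * (Ψ (p x)).toReal) ν := by
      refine ⟨Measurable.aestronglyMeasurable ?_, ?_⟩
      · have hm2 : Measurable fun x => (Ψ (s (J x))).toReal :=
          (measurable_from_nat (f := fun n => (Ψ (s n)).toReal)).comp hJm
        simp only [hpdef]
        exact (hA.mul hpm').sub (measurable_const.mul hm2)
      · refine HasFiniteIntegral.of_bounded (C := Cb * K₁ + α * K₂) (ae_of_all _ fun x => ?_)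
        rw [Real.norm_eq_abs]
        have h1 : |A x * p x| ≤ Cb * K₁ :=
          (abs_mul _ _).le.trans (mul_le_mul (hCbx x) (hpK x) (abs_nonneg _) hCb0)
        have h2 : |α * (Ψ (p x)).toReal| = α * (Ψ (p x)).toReal := by
          rw [abs_of_nonneg (mul_nonneg hα.le ENNReal.toReal_nonneg)]
        have h3 : α * (Ψ (p x)).toReal ≤ α * K₂ := mul_le_mul_of_nonneg_left (htK x) hα.le
        calc |A x * p x - α * (Ψ (p x)).toReal|
            ≤ |A x * p x| + |α * (Ψ (p x)).toReal| := abs_sub _ _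
          _ ≤ Cb * K₁ + α * K₂ := by rw [h2]; exact add_le_add h1 h3
    have hptlow : ∀ x, α * Ψstar (A x / α) - (α * ε₁ + α * (L * δ)) ≤
        A x * p x - α * (Ψ (p x)).toReal := by
      intro x
      have hy1 : -M ≤ -M + δ * (J x : ℝ) := by
        have : (0:ℝ) ≤ δ * (J x : ℝ) := mul_nonneg hδ.le (Nat.cast_nonneg _)
        linarith
      have hy2 := hfl1 x
      have hy3 : A x / α ≤ M + 1 := by linarith [(hAM x).2]
      have hlipx := hlip (-M + δ * (J x : ℝ)) (A x / α) hy1 hy2 hy3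
      have hLd : L * (A x / α - (-M + δ * (J x : ℝ))) ≤ L * δ :=
        mul_le_mul_of_nonneg_left (by linarith [hfl2 x]) hL0
      have hgood := hsgood (J x)
      have hmono_s : s (J x) * (-M + δ * (J x : ℝ)) ≤ s (J x) * (A x / α) :=
        mul_le_mul_of_nonneg_left hy2 (hs0 (J x))
      have c1 : Ψstar (A x / α) - Ψstar (-M + δ * (J x : ℝ)) ≤ L * δ := hlipx.trans hLd
      have hstep : Ψstar (A x / α) - L * δ - ε₁ ≤
          s (J x) * (A x / α) - (Ψ (s (J x))).toReal := by linarith [c1, hgood, hmono_s]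
      have hid : α * (s (J x) * (A x / α)) = A x * s (J x) := by field_simp
      have := mul_le_mul_of_nonneg_left hstep hα.le
      simp only [hpdef]
      nlinarith
    have h2 : ∫ x, (A x * p x - α * (Ψ (p x)).toReal) ∂ν ≤ b :=
      hb ⟨p, hpm, fun x => by rw [hpdef]; exact hs0 _, fun x => by rw [hpdef]; exact hsfin _,
        hint_p, rfl⟩
    have hconst : ∫ x, (α * Ψstar (A x / α) - (α * ε₁ + α * (L * δ))) ∂ν
        = α * ∫ x, Ψstar (A x / α) ∂ν - (α * ε₁ + α * (L * δ)) := by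
      rw [integral_sub (hint_star.const_mul α) (integrable_const _), integral_const,
        probReal_univ, one_smul, integral_const_mul]
    have h1 : α * ∫ x, Ψstar (A x / α) ∂ν - (α * ε₁ + α * (L * δ)) ≤
        ∫ x, (A x * p x - α * (Ψ (p x)).toReal) ∂ν := by
      have hmono_int := integral_mono ((hint_star.const_mul α).sub (integrable_const _))
        hint_p hptlow
      simp only [Pi.sub_apply] at hmono_int
      linarith [hmono_int, hconst.le, hconst.ge]
    have hδcalc : α * ε₁ + α * (L * δ) ≤ ε := by
      have e1 : α * ε₁ = ε / 2 := by rw [hε₁def]; field_simp; try ring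
      have e2 : α * (L * δ) = L * ε / (2 * (L + 1)) := by
        rw [hδdef]; field_simp
      have e3 : L * ε / (2 * (L + 1)) ≤ ε / 2 := by
        rw [div_le_div_iff₀ (by positivity) (by norm_num)]
        nlinarith [mul_nonneg hL0 hε.le]
      linarith
    linarith
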